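/- (Theorem 1.) Let P = {x ∈ ℝ^n : A x = b and x ≥ 0} be a standard-form polyhedron and let x ∈ P. The following are equivalent: (1) x is a vertex of P, i.e., there exists c ∈ ℝ^n such that c·y < c·x for every y ∈ P with y ≠ x; (2) x is an extreme point of P (x ∈ Set.extremePoints ℝ P); (3) x is a basic feasible solution, i.e., the columns {A_j : x_j ≠ 0} of A are linearly independent over ℝ. -/

import Mathlib

open Matrix Finset

/-- helper: sums of functions vanishing off the support of `x` restrict to the subtype. -/
lemma sum_support_eq {n : ℕ} (x : Fin n → ℝ) (F : Fin n → ℝ)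
    (hF : ∀ j, x j = 0 → F j = 0) :
    ∑ j : Fin n, F j = ∑ j : {j : Fin n // x j ≠ 0}, F (j : Fin n) := by
  rw [← Finset.sum_subtype (Finset.univ.filter fun j => x j ≠ 0)
      (by simp) F]
  refine (Finset.sum_subset (Finset.filter_subset _ _) ?_).symm
  intro j _ hj
  simp only [Finset.mem_filter, Finset.mem_univ, true_and, not_not] at hj
  exact hF j hj

/-- Theorem 1 of the paper: for a point `x` of the standard-form polyhedron
`P = {x | A x = b ∧ x ≥ 0}`, the following are equivalent:
(1) `x` is a vertex of `P`;
(2) `x` is an extreme point of `P`;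
(3) `x` is a basic feasible solution (the columns of `A` indexed by
`{j | x j ≠ 0}` are linearly independent over `ℝ`). -/
theorem vertex_tfae (m n : ℕ) (A : Matrix (Fin m) (Fin n) ℝ)
    (b : Fin m → ℝ) (P : Set (Fin n → ℝ))
    (hP : P = {x : Fin n → ℝ | A.mulVec x = b ∧ ∀ j, 0 ≤ x j})
    (x : Fin n → ℝ) (hx : x ∈ P) :
    List.TFAE
      [∃ c : Fin n → ℝ, ∀ y ∈ P, y ≠ x →
          dotProduct c y < dotProduct c x,
        x ∈ Set.extremePoints ℝ P,
        LinearIndependent ℝ (fun j : {j : Fin n // x j ≠ 0} =>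
          (fun i : Fin m => A i (j : Fin n)))] := by
  subst hP
  obtain ⟨hxA, hxnn⟩ := hx
  tfae_have 1 → 2
  · rintro ⟨c, hc⟩
    have key : ∀ y ∈ {x : Fin n → ℝ | A.mulVec x = b ∧ ∀ j, 0 ≤ x j},
        c ⬝ᵥ y ≤ c ⬝ᵥ x := by
      intro y hy
      rcases eq_or_ne y x with rfl | hne
      · exact le_refl _
      · exact (hc y hy hne).le
    have main : ∀ y1 ∈ {x : Fin n → ℝ | A.mulVec x = b ∧ ∀ j, 0 ≤ x j},
        ∀ y2 ∈ {x : Fin n → ℝ | A.mulVec x = b ∧ ∀ j, 0 ≤ x j},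
        ∀ a bb : ℝ, 0 < a → 0 < bb → a + bb = 1 →
        a • y1 + bb • y2 = x → y1 = x := by
      intro y1 hy1 y2 hy2 a bb ha hb hab hsum
      by_contra hne
      have h1 : c ⬝ᵥ y1 < c ⬝ᵥ x := hc y1 hy1 hne
      have h2 : c ⬝ᵥ y2 ≤ c ⬝ᵥ x := key y2 hy2
      have hx' : c ⬝ᵥ x = a * (c ⬝ᵥ y1) + bb * (c ⬝ᵥ y2) := by
        rw [← hsum, dotProduct_add, dotProduct_smul,
          dotProduct_smul, smul_eq_mul, smul_eq_mul]
      have h1' := mul_lt_mul_of_pos_left h1 ha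
      have h2' := mul_le_mul_of_nonneg_left h2 hb.le
      have heq : a * (c ⬝ᵥ x) + bb * (c ⬝ᵥ x) = c ⬝ᵥ x := by
        rw [← add_mul, hab, one_mul]
      linarith
    refine ⟨⟨hxA, hxnn⟩, ?_⟩
    rintro x1 hx1 x2 hx2 ⟨a, bb, ha, hb, hab, hsum⟩
    exact main x1 hx1 x2 hx2 a bb ha hb hab hsum
  tfae_have 2 → 3
  · intro h2
    by_contra h3
    obtain ⟨g, hg, j0, hj0⟩ := Fintype.not_linearIndependent_iff.mp h3
    set d : Fin n → ℝ := fun j => if h : x j ≠ 0 then g ⟨j, h⟩ else 0 with hd_def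
    have hd_supp : ∀ j, x j = 0 → d j = 0 := by
      intro j hj; simp [hd_def, hj]
    have hd_sub : ∀ j : {j : Fin n // x j ≠ 0}, d (j : Fin n) = g j := by
      intro j; simp [hd_def, j.2]
    have hAd : A.mulVec d = 0 := by
      funext i
      have hgi : ∑ j : {j : Fin n // x j ≠ 0}, g j * A i (j : Fin n) = 0 := by
        have := congrFun hg i
        simpa [Finset.sum_apply] using this
      simp only [Matrix.mulVec, dotProduct, Pi.zero_apply]
      have hsub := sum_support_eq x (fun j => A i j * d j)
        (fun j hj => by simp [hd_supp j hj])
      rw [hsub]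
      refine Eq.trans ?_ hgi
      refine Finset.sum_congr rfl fun j _ => ?_
      show A i (j : Fin n) * d (j : Fin n) = g j * A i (j : Fin n)
      rw [hd_sub j, mul_comm]
    have hdj0 : d (j0 : Fin n) ≠ 0 := by rw [hd_sub j0]; exact hj0
    have hne : Nonempty {j : Fin n // x j ≠ 0} := ⟨j0⟩
    set f : {j : Fin n // x j ≠ 0} → ℝ :=
      fun j => if d (j : Fin n) = 0 then 1 else x j / |d (j : Fin n)| with hf_def
    have hfpos : ∀ j : {j : Fin n // x j ≠ 0}, 0 < f j := by
      intro j
      by_cases h : d (j : Fin n) = 0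
      · simp [hf_def, h]
      · have hx' : 0 < x (j : Fin n) := lt_of_le_of_ne (hxnn _) (Ne.symm j.2)
        simp only [hf_def, h, if_false]
        exact div_pos hx' (abs_pos.mpr h)
    set ε : ℝ := Finset.univ.inf' (Finset.univ_nonempty) f with hε_def
    have hεpos : 0 < ε := by
      rw [hε_def, Finset.lt_inf'_iff]
      exact fun j _ => hfpos j
    have hkey : ∀ j : Fin n, |ε * d j| ≤ x j := by
      intro j
      by_cases h : d j = 0
      · rw [h, mul_zero, abs_zero]; exact hxnn j
      · have hxj : x j ≠ 0 := fun hx0 => h (hd_supp j hx0)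
        have hεle : ε ≤ f ⟨j, hxj⟩ := Finset.inf'_le _ (Finset.mem_univ _)
        rw [hf_def] at hεle
        simp only [h, if_false] at hεle
        rw [abs_mul, abs_of_pos hεpos]
        calc ε * |d j| ≤ (x j / |d j|) * |d j| := by
              exact mul_le_mul_of_nonneg_right hεle (abs_nonneg _)
          _ = x j := div_mul_cancel₀ _ (abs_ne_zero.mpr h)
    have hmem : ∀ s : ℝ, |s| ≤ 1 →
        x + (s * ε) • d ∈ {x : Fin n → ℝ | A.mulVec x = b ∧ ∀ j, 0 ≤ x j} := by
      intro s hs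
      constructor
      · rw [Matrix.mulVec_add, Matrix.mulVec_smul, hAd, smul_zero, add_zero, hxA]
      · intro j
        simp only [Pi.add_apply, Pi.smul_apply, smul_eq_mul]
        have h1 : |s * ε * d j| ≤ x j := by
          rw [mul_assoc, abs_mul]
          calc |s| * |ε * d j| ≤ 1 * |ε * d j| :=
                mul_le_mul_of_nonneg_right hs (abs_nonneg _)
            _ = |ε * d j| := one_mul _
            _ ≤ x j := hkey j
        have := (abs_le.mp h1).1
        linarith
    have hm1 : x + ((-1 : ℝ) * ε) • d ∈ _ := hmem (-1) (by norm_num)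
    have hp1 : x + ((1 : ℝ) * ε) • d ∈ _ := hmem 1 (by norm_num)
    have hseg : x ∈ openSegment ℝ (x + ((-1 : ℝ) * ε) • d) (x + ((1 : ℝ) * ε) • d) := by
      refine ⟨1/2, 1/2, by norm_num, by norm_num, by norm_num, ?_⟩
      module
    have := h2.2 hp1 hm1 (by rw [openSegment_symm]; exact hseg)
    have hd0 : ε • d = 0 := by
      have : x + ((1 : ℝ) * ε) • d = x := this
      rw [one_mul] at this
      have := congrArg (· - x) this
      simpa [add_sub_cancel_left] using this
    rcases smul_eq_zero.mp hd0 with h | h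
    · exact absurd h (ne_of_gt hεpos)
    · exact hdj0 (by rw [h]; rfl)
  tfae_have 3 → 1
  · intro h3
    refine ⟨fun j => if x j = 0 then -1 else 0, ?_⟩
    intro y hy hne
    obtain ⟨hyA, hynn⟩ := hy
    set c : Fin n → ℝ := fun j => if x j = 0 then -1 else 0 with hc_def
    have hcx : c ⬝ᵥ x = 0 := by
      apply Finset.sum_eq_zero
      intro j _
      by_cases h : x j = 0 <;> simp [hc_def, h]
    have hterm : ∀ j : Fin n, c j * y j ≤ 0 := by
      intro j
      by_cases h : x j = 0 <;> simp [hc_def, h]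
      exact hynn j
    have hcy_le : c ⬝ᵥ y ≤ 0 := Finset.sum_nonpos fun j _ => hterm j
    have hcy_ne : c ⬝ᵥ y ≠ 0 := by
      intro hcy
      have hall := (Finset.sum_eq_zero_iff_of_nonpos fun j _ => hterm j).mp hcy
      have hy0 : ∀ j, x j = 0 → y j = 0 := by
        intro j hj
        have := hall j (Finset.mem_univ j)
        simpa [hc_def, hj] using this
      set g : {j : Fin n // x j ≠ 0} → ℝ := fun j => y j - x j with hg_def
      have hsum : ∑ j : {j : Fin n // x j ≠ 0}, g j •
          (fun i : Fin m => A i (j : Fin n)) = 0 := by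
        funext i
        simp only [Finset.sum_apply, Pi.smul_apply, smul_eq_mul, Pi.zero_apply]
        have hfull : ∑ j : Fin n, A i j * (y j - x j) = 0 := by
          have hAyx : A.mulVec (y - x) = 0 := by
            rw [Matrix.mulVec_sub, hyA, hxA, sub_self]
          have := congrFun hAyx i
          simpa [Matrix.mulVec, dotProduct, mul_sub] using this
        have hsub := sum_support_eq x (fun j => A i j * (y j - x j))
          (fun j hj => by simp [hy0 j hj, hj])
        calc ∑ j : {j : Fin n // x j ≠ 0}, g j * A i (j : Fin n)
            = ∑ j : {j : Fin n // x j ≠ 0}, A i (j : Fin n) * (y (j : Fin n) - x (j : Fin n)) := by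
              refine Finset.sum_congr rfl fun j _ => ?_
              rw [hg_def, mul_comm]
          _ = ∑ j : Fin n, A i j * (y j - x j) := hsub.symm
          _ = 0 := hfull
      have hg0 := Fintype.linearIndependent_iff.mp h3 g hsum
      apply hne
      funext j
      by_cases h : x j = 0
      · rw [hy0 j h, h]
      · have := hg0 ⟨j, h⟩
        rw [hg_def] at this
        simpa [sub_eq_zero] using this
    rw [hcx]
    exact lt_of_le_of_ne hcy_le hcy_ne
  tfae_finish
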